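/- The space U of isometry classes of compact ultrametric spaces, equipped with the ultrametric Gromov–Hausdorff distance ρ_GHu, is not separable: there exists an uncountable family of compact ultrametric spaces that are pairwise at ρ_GHu-distance at least 1/4. -/

import Mathlib

/-- The ultrametric Gromov–Hausdorff distance: infimum of Hausdorff distances between
isometric copies of `X` and `Y` inside a common ultrametric space. -/
noncomputable def GHuDist (X Y : Type*) [MetricSpace X] [MetricSpace Y] : ℝ :=
  sInf { r : ℝ | ∃ (Z : Type) (_ : MetricSpace Z), IsUltrametricDist Z ∧
    ∃ (i : X → Z) (j : Y → Z), Isometry i ∧ Isometry j ∧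
      Metric.hausdorffDist (Set.range i) (Set.range j) = r }

/-- The two-point space with distance `max c (1/2)`. -/
def TwoPt (_c : ℝ) : Type := Bool

namespace TwoPt

instance (c : ℝ) : Fintype (TwoPt c) := inferInstanceAs (Fintype Bool)
instance (c : ℝ) : Nonempty (TwoPt c) := inferInstanceAs (Nonempty Bool)
instance (c : ℝ) : DecidableEq (TwoPt c) := inferInstanceAs (DecidableEq Bool)

noncomputable instance (c : ℝ) : MetricSpace (TwoPt c) where
  dist x y := if x = y then 0 else max c (1/2)
  dist_self x := by simp
  dist_comm x y := by by_cases h : x = y <;> simp [h, eq_comm]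
  dist_triangle x y z := by
    have h2 : (0:ℝ) ≤ max c (1/2) := le_trans (by norm_num) (le_max_right _ _)
    by_cases hxz : x = z <;> by_cases hxy : x = y <;> by_cases hyz : y = z <;>
      simp_all
  eq_of_dist_eq_zero {x y} h := by
    by_cases hxy : x = y
    · exact hxy
    · exfalso
      simp only [hxy, if_false] at h
      have : (1/2:ℝ) ≤ max c (1/2) := le_max_right _ _
      rw [h] at this; norm_num at this

lemma dist_eq (c : ℝ) (x y : TwoPt c) :
    dist x y = if x = y then 0 else max c (1/2) := rfl

instance (c : ℝ) : IsUltrametricDist (TwoPt c) := by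
  constructor
  intro x y z
  have h2 : (0:ℝ) ≤ max c (1/2) := le_trans (by norm_num) (le_max_right _ _)
  by_cases hxz : x = z <;> by_cases hxy : x = y <;> by_cases hyz : y = z <;>
    simp_all [dist_eq]

instance (c : ℝ) : CompactSpace (TwoPt c) := inferInstance

end TwoPt

/-- Products of ultrametric spaces (with the sup metric) are ultrametric. -/
instance prodUltra (X Y : Type*) [MetricSpace X] [MetricSpace Y]
    [IsUltrametricDist X] [IsUltrametricDist Y] : IsUltrametricDist (X × Y) := by
  constructor
  intro x y z
  simp only [Prod.dist_eq]
  apply max_le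
  · exact (IsUltrametricDist.dist_triangle_max x.1 y.1 z.1).trans
      (max_le_max (le_max_left _ _) (le_max_left _ _))
  · exact (IsUltrametricDist.dist_triangle_max x.2 y.2 z.2).trans
      (max_le_max (le_max_right _ _) (le_max_right _ _))

/-- Key geometric fact in an ultrametric space. -/
lemma twoPt_key {Z : Type} [MetricSpace Z] [IsUltrametricDist Z]
    {a b p q : Z} {c₁ c₂ : ℝ} (h1 : 1/2 ≤ c₁) (hlt : c₁ < c₂)
    (dab : dist a b = c₁) (dpq : dist p q = c₂)
    (hp : dist p a < 1/4 ∨ dist p b < 1/4) (hq : dist q a < 1/4 ∨ dist q b < 1/4) :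
    False := by
  have hq4 : (1/4:ℝ) < c₁ := by linarith
  -- d(p,q) ≤ max (d(p,w)) (d(w,q)) for any w
  have key : ∀ w : Z, dist p w < 1/4 → dist q w < 1/4 → False := by
    intro w hpw hqw
    have : dist p q ≤ max (dist p w) (dist w q) := IsUltrametricDist.dist_triangle_max p w q
    rw [dist_comm w q] at this
    have : dist p q < 1/4 := lt_of_le_of_lt this (max_lt hpw hqw)
    rw [dpq] at this; linarith
  have key2 : ∀ u v : Z, dist u v = c₁ → dist p u < 1/4 → dist q v < 1/4 → False := by
    intro u v duv hpu hqv
    have t1 : dist p q ≤ max (dist p u) (dist u q) := IsUltrametricDist.dist_triangle_max p u q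
    have t2 : dist u q ≤ max (dist u v) (dist v q) := IsUltrametricDist.dist_triangle_max u v q
    rw [dist_comm v q] at t2
    rw [duv] at t2
    have : dist p q ≤ max (dist p u) (max c₁ (dist q v)) := t1.trans (max_le_max le_rfl t2)
    rw [dpq] at this
    have h1' : dist p u ≤ c₁ := le_of_lt (lt_trans hpu hq4)
    have h2' : max c₁ (dist q v) ≤ c₁ := max_le le_rfl (le_of_lt (lt_trans hqv hq4))
    have : c₂ ≤ c₁ := this.trans (max_le h1' h2')
    linarith
  have dba : dist b a = c₁ := by rw [dist_comm]; exact dab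
  rcases hp with hpa | hpb <;> rcases hq with hqa | hqb
  · exact key a hpa hqa
  · exact key2 a b dab hpa hqb
  · exact key2 b a dba hpb hqa
  · exact key b hpb hqb

/-- If `1/2 ≤ c₁ < c₂`, then no ultrametric space contains isometric copies of the
two-point spaces at Hausdorff distance less than `1/4`. -/
lemma twoPt_hausdorff {c₁ c₂ : ℝ} (h1 : 1/2 ≤ c₁) (hlt : c₁ < c₂)
    (Z : Type) [MetricSpace Z] [IsUltrametricDist Z]
    (i : TwoPt c₁ → Z) (j : TwoPt c₂ → Z) (hi : Isometry i) (hj : Isometry j) :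
    1/4 ≤ Metric.hausdorffDist (Set.range i) (Set.range j) := by
  by_contra h
  push_neg at h
  have hfin : EMetric.hausdorffEdist (Set.range i) (Set.range j) ≠ ⊤ := by
    apply Metric.hausdorffEdist_ne_top_of_nonempty_of_bounded
    · exact Set.range_nonempty _
    · exact Set.range_nonempty _
    · exact (Set.finite_range i).isBounded
    · exact (Set.finite_range j).isBounded
  set p := j true
  set q := j false
  set a := i true
  set b := i false
  have dab : dist a b = c₁ := by
    have := hi.dist_eq true false
    exact this.trans ((TwoPt.dist_eq c₁ true false).trans
      ((if_neg (by decide : (true : TwoPt c₁) ≠ false)).trans (max_eq_left h1)))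
  have dpq : dist p q = c₂ := by
    have := hj.dist_eq true false
    exact this.trans ((TwoPt.dist_eq c₂ true false).trans
      ((if_neg (by decide : (true : TwoPt c₂) ≠ false)).trans (max_eq_left (by linarith : (1/2:ℝ) ≤ c₂))))
  have hp : ∃ x ∈ Set.range i, dist x p < 1/4 :=
    Metric.exists_dist_lt_of_hausdorffDist_lt' (Set.mem_range_self true) h hfin
  have hq : ∃ x ∈ Set.range i, dist x q < 1/4 :=
    Metric.exists_dist_lt_of_hausdorffDist_lt' (Set.mem_range_self false) h hfin
  obtain ⟨x, ⟨u, rfl⟩, hx⟩ := hp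
  obtain ⟨y, ⟨v, rfl⟩, hy⟩ := hq
  rw [dist_comm] at hx hy
  apply twoPt_key h1 hlt dab dpq (p := p) (q := q) (a := a) (b := b)
  · cases u
    · exact Or.inr hx
    · exact Or.inl hx
  · cases v
    · exact Or.inr hy
    · exact Or.inl hy

/-- The two-point spaces with parameters in `[1/2, 1]` are pairwise at ultrametric
Gromov–Hausdorff distance at least `1/4`. -/
lemma twoPt_GHuDist {c₁ c₂ : ℝ} (h1 : 1/2 ≤ c₁) (h1' : 1/2 ≤ c₂) (hne : c₁ ≠ c₂) :
    1/4 ≤ GHuDist (TwoPt c₁) (TwoPt c₂) := by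
  apply le_csInf
  · -- nonempty: embed both into the product
    refine ⟨_, TwoPt c₁ × TwoPt c₂, inferInstance, inferInstance,
      fun x => (x, Classical.arbitrary _), fun y => (Classical.arbitrary _, y), ?_, ?_, rfl⟩
    · intro x y
      simp [edist_dist, Prod.dist_eq, dist_nonneg]
    · intro x y
      simp [edist_dist, Prod.dist_eq, dist_nonneg]
  · rintro r ⟨Z, _, hU, i, j, hi, hj, rfl⟩
    rcases lt_or_gt_of_ne hne with hlt | hlt
    · exact twoPt_hausdorff h1 hlt Z i j hi hj
    · rw [Metric.hausdorffDist_comm]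
      exact twoPt_hausdorff h1' hlt Z j i hj hi

/-- The space of compact ultrametric spaces is not separable: there is an uncountable
family of compact ultrametric spaces which are pairwise at ultrametric Gromov–Hausdorff
distance at least 1/4. -/
theorem GHu_not_separable :
    ∃ (ι : Type) (F : ι → Type) (m : ∀ i, MetricSpace (F i)),
      ¬ Countable ι ∧
      (∀ i, letI := m i; CompactSpace (F i) ∧ Nonempty (F i) ∧ IsUltrametricDist (F i)) ∧
      (∀ i j, i ≠ j → letI := m i; letI := m j; 1/4 ≤ GHuDist (F i) (F j)) := by
  refine ⟨↥(Set.Icc (1/2 : ℝ) 1), fun c => TwoPt c.1, fun c => inferInstance, ?_, ?_, ?_⟩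
  · intro h
    have hmk : Cardinal.mk ↥(Set.Icc (1/2 : ℝ) 1) = Cardinal.continuum :=
      Cardinal.mk_Icc_real (by norm_num)
    have : Cardinal.mk ↥(Set.Icc (1/2 : ℝ) 1) ≤ Cardinal.aleph0 :=
      Cardinal.mk_le_aleph0
    rw [hmk] at this
    exact absurd this (not_le.mpr Cardinal.aleph0_lt_continuum)
  · intro c
    exact ⟨inferInstance, inferInstance, inferInstance⟩
  · intro c₁ c₂ hne
    exact twoPt_GHuDist c₁.2.1 c₂.2.1 (fun h => hne (Subtype.ext h))
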